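/- Let r≥2, n≥1, m=2r+4, and p,q,t∈ℂ with |p|<1, |q|<1, t∈ℂ*. Fix generic a_1,…,a_r,a_{r+2},…,a_{m-1}∈ℂ* and set ã_m=pq/(t^{2n-2} a_2⋯a_r a_{r+2}⋯a_{m-1}). With L_{r,n} as in the context and with L̃_{r,n} denoting the expression [ ∏_{i=1}^{n-1} Γ(t^i;p,q)^{C(n-i+r-2,r-1)} / ((p;p)_∞(q;q)_∞)^{C(n+r-2,r-1)} ] · ∏_{i=0}^{n-1} ∏_{k≠1,r+1} ( Γ(t^i a_1 a_k;p,q)Γ(t^i a_k/a_1;p,q) )^{C(n-i+r-2,r-1)} · [ ∏_{i=0}^{n-1} ∏_{k<l, k,l≠1,r+1} Γ(t^i a_k a_l;p,q)^{C(n-i+r-2,r-1)} ] / [ ∏_{0≤i+j<n} ∏_{1≤k<l≤r} ( e(t^i a_k,t^j a_l;p)e(t^i a_k,t^j a_l;q) )^{C(n-i-j+r-3,r-2)} ] (all with a_m interpreted as ã_m, indices k,l ranging in {1,…,m}), the following identity holds: L̃_{r,n} = ((p;p)_∞(q;q)_∞)^{-C(n+r-2,r-1)} · [ Γ(t;p,q)^{C(n+r-2,r-1)}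 / ∏_{i=1}^n Γ(t^i;p,q)^{C(n-i+r-2,r-2)} ] · [ ∏_{k≠1,r+1} ( Γ(a_1 a_k;p,q)Γ(a_k/a_1;p,q) )^{C(n+r-2,r-1)} ] / [ ∏_{j=0}^{n-1} ∏_{l=2}^r ( e(a_1,t^j a_l;p)·e(a_1,t^j a_l;q) )^{C(n-j+r-3,r-2)} ] · L_{r-1,n}(a_2,…,a_r,a_{r+2},…,a_{m-1},ã_m) · L_{r,n-1}(t a_1, a_2,…,a_r, t a_1^{-1}, a_{r+2},…,a_{m-1}, ã_m), where L_{r,0}=1 and C(a,b)=binomial(a,b). -/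

import Mathlib

open scoped BigOperators Topology
open Finset MeasureTheory

noncomputable section

/-- `(u;p)_∞ = ∏_{i≥0} (1 - p^i u)`. -/
def poch (u p : ℂ) : ℂ := ∏' i : ℕ, (1 - p ^ i * u)

/-- `(u;p,q)_∞ = ∏_{i,j≥0} (1 - p^i q^j u)`. -/
def poch2 (u p q : ℂ) : ℂ := ∏' ij : ℕ × ℕ, (1 - p ^ ij.1 * q ^ ij.2 * u)

/-- The multiplicative theta function `θ(u;p)`. -/
def theta (u p : ℂ) : ℂ := poch u p * poch (p / u) p

/-- The elliptic gamma function `Γ(u;p,q)`. -/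
def ellGamma (u p q : ℂ) : ℂ := poch2 (p * q / u) p q / poch2 u p q

/-- `e(u,v;p) = u⁻¹ θ(uv;p) θ(u/v;p)`. -/
def efun (p t u v : ℂ) : ℂ := u⁻¹ * theta (u * v) p * theta (u / v) p

/-- `θ(u;p)_{t,k}`. -/
def thetaFac (p t u : ℂ) (k : ℕ) : ℂ := ∏ j ∈ Finset.range k, theta (t ^ j * u) p

/-- `e(u,v;p)_{t,k}`. -/
def efunFac (p t u v : ℂ) (k : ℕ) : ℂ := ∏ j ∈ Finset.range k, efun p t (t ^ j * u) v

/-- The number of indices `j < i` with `k j = l`. -/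
def cnt {n s : ℕ} (k : Fin n → Fin s) (i : ℕ) (l : Fin s) : ℕ :=
  (Finset.univ.filter (fun j : Fin n => (j : ℕ) < i ∧ k j = l)).card

/-- The elliptic interpolation function `E_μ(c;z;p)` of type `BC_n`. -/
def interpE (p t : ℂ) {s n : ℕ} (c : Fin s → ℂ) (z : Fin n → ℂ) (μ : Fin s → ℕ) : ℂ :=
  ∑ k : Fin n → Fin s,
    if ∀ l, cnt k n l = μ l then
      ∏ i : Fin n, ∏ l ∈ Finset.univ.filter (fun l => l ≠ k i),
        efun p t (z i) (t ^ cnt k ((i : ℕ) + 1) l * c l) /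
          efun p t (t ^ cnt k (i : ℕ) (k i) * c (k i)) (t ^ cnt k (i : ℕ) l * c l)
    else 0

/-- `Z_{s,n}`, the multi-indices `μ ∈ ℕ^s` with `|μ| = n`. -/
abbrev Zidx (s n : ℕ) := {μ : Fin s → ℕ // ∑ i, μ i = n}

instance (s n : ℕ) : Fintype (Zidx s n) :=
  Fintype.subtype (Finset.Nat.antidiagonalTuple s n)
    (fun μ => Finset.Nat.mem_antidiagonalTuple)

/-- The `BC_n` elliptic hypergeometric kernel `Φ(z;a;p,q)`. -/
def PhiBC (p q t : ℂ) {n m : ℕ} (a : Fin m → ℂ) (z : Fin n → ℂ) : ℂ :=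
  (∏ i, (∏ k, ellGamma (a k * z i) p q * ellGamma (a k * (z i)⁻¹) p q) /
      (ellGamma (z i ^ 2) p q * ellGamma ((z i)⁻¹ ^ 2) p q)) *
  ∏ i, ∏ j ∈ Finset.univ.filter (fun j => i < j),
    (ellGamma (t * (z i * z j)) p q * ellGamma (t * (z i / z j)) p q *
        ellGamma (t * (z j / z i)) p q * ellGamma (t / (z i * z j)) p q) /
      (ellGamma (z i * z j) p q * ellGamma (z i / z j) p q *
        ellGamma (z j / z i) p q * ellGamma ((z i * z j)⁻¹) p q)

/-- `∫_{T^n} f(z) ω_n(z)` where `ω_n(z) = dz/((2πi)^n z₁⋯z_n)`. -/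
def torusInt (n : ℕ) (f : (Fin n → ℂ) → ℂ) : ℂ :=
  (1 / (2 * (Real.pi : ℂ))) ^ n *
    ∫ θ : Fin n → ℝ in Set.univ.pi fun _ : Fin n => Set.Icc (0 : ℝ) (2 * Real.pi),
      f fun i => Complex.exp (Complex.I * (θ i : ℂ))


/-- The explicit product `L_{r,n}(a)` of elliptic gamma functions and `e`-factors. -/
def Lfun (p q t : ℂ) (r n : ℕ) (b : Fin (2 * r + 4) → ℂ) : ℂ :=
  (∏ i ∈ Finset.range n, ∏ k : Fin (2 * r + 4), ∏ l ∈ Finset.univ.filter (fun l => k < l),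
      ellGamma (t ^ i * (b k * b l)) p q ^ ((n - i + r - 2).choose (r - 1)))
  / ∏ i ∈ Finset.range n, ∏ j ∈ Finset.range (n - i), ∏ k : Fin r,
      ∏ l ∈ Finset.univ.filter (fun l => k < l),
        (efun p t (t ^ i * b (Fin.castLE (by omega) k)) (t ^ j * b (Fin.castLE (by omega) l)) *
            efun q t (t ^ i * b (Fin.castLE (by omega) k)) (t ^ j * b (Fin.castLE (by omega) l)))
          ^ ((n - i - j + r - 3).choose (r - 2))

/-- The parameter vector `(a₁,…,a_r, b, a_{r+2},…,a_{m-1}, a_m(b))` with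
`a_m(b) = pq/(t^{2n-2} a₁⋯a_{m-1})`. -/
def Avec (p q t : ℂ) (r n : ℕ) (a : Fin (2 * r + 4) → ℂ) (b : ℂ) : Fin (2 * r + 4) → ℂ :=
  fun k =>
    if (k : ℕ) = r then b
    else if (k : ℕ) = 2 * r + 3 then
      p * q / (t ^ (2 * n - 2) *
        ((∏ l ∈ Finset.univ.filter
            (fun l : Fin (2 * r + 4) => (l : ℕ) ≠ r ∧ (l : ℕ) ≠ 2 * r + 3), a l) * b))
    else a k

/-- `ã_m = pq/(t^{2n-2} a₂⋯a_r a_{r+2}⋯a_{m-1})`. -/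
def amtil (p q t : ℂ) (r n : ℕ) (a : Fin (2 * r + 4) → ℂ) : ℂ :=
  p * q / (t ^ (2 * n - 2) *
    ∏ l ∈ Finset.univ.filter
      (fun l : Fin (2 * r + 4) => (l : ℕ) ≠ 0 ∧ (l : ℕ) ≠ r ∧ (l : ℕ) ≠ 2 * r + 3), a l)

/-- The limit parameter vector `ã = (a₁,…,a_r, a₁⁻¹, a_{r+2},…,a_{m-1}, ã_m)`. -/
def Atld (p q t : ℂ) (r n : ℕ) (a : Fin (2 * r + 4) → ℂ) : Fin (2 * r + 4) → ℂ :=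
  fun k =>
    if (k : ℕ) = r then (a 0)⁻¹
    else if (k : ℕ) = 2 * r + 3 then amtil p q t r n a
    else a k

/-- The vector `(a₂,…,a_r, a_{r+2},…,a_{m-1}, ã_m)` of length `2(r-1)+4`. -/
def Bvec (p q t : ℂ) (r n : ℕ) (a : Fin (2 * r + 4) → ℂ) : Fin (2 * (r - 1) + 4) → ℂ :=
  fun k =>
    if h : (k : ℕ) < r - 1 then a ⟨(k : ℕ) + 1, by omega⟩
    else if h2 : (k : ℕ) < 2 * r + 1 then a ⟨(k : ℕ) + 2, by omega⟩
    else amtil p q t r n a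

/-- The vector `(t a₁, a₂,…,a_r, t a₁⁻¹, a_{r+2},…,a_{m-1}, ã_m)`. -/
def Ashift (p q t : ℂ) (r n : ℕ) (a : Fin (2 * r + 4) → ℂ) : Fin (2 * r + 4) → ℂ :=
  fun k =>
    if (k : ℕ) = 0 then t * a 0
    else if (k : ℕ) = r then t * (a 0)⁻¹
    else Atld p q t r n a k


variable {M : Type*} [CommMonoid M] {ι : Type*} [LinearOrder ι] [DecidableEq ι]

/-- Extract a single index from a product over (strictly ordered) pairs of a
symmetric function. -/
theorem prod_pairs_extract (s : Finset ι) (f : ι → ι → M)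
    (hf : ∀ k l, f k l = f l k) (j : ι) (hj : j ∈ s) :
    (∏ k ∈ s, ∏ l ∈ s.filter (fun l => k < l), f k l)
      = (∏ k ∈ s.erase j, f j k) *
        ∏ k ∈ s.erase j, ∏ l ∈ (s.erase j).filter (fun l => k < l), f k l := by
  rw [← Finset.mul_prod_erase s _ hj]
  have h1 : ∀ k ∈ s.erase j,
      (∏ l ∈ s.filter (fun l => k < l), f k l)
        = (if k < j then f k j else 1) *
          ∏ l ∈ (s.erase j).filter (fun l => k < l), f k l := by
    intro k hk
    by_cases hkj : k < j
    · rw [if_pos hkj]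
      have hins : s.filter (fun l => k < l)
          = insert j ((s.erase j).filter (fun l => k < l)) := by
        ext x
        simp only [mem_filter, mem_insert, mem_erase]
        constructor
        · rintro ⟨hx, hkx⟩
          by_cases hxj : x = j
          · exact Or.inl hxj
          · exact Or.inr ⟨⟨hxj, hx⟩, hkx⟩
        · rintro (rfl | ⟨⟨hxj, hx⟩, hkx⟩)
          · exact ⟨hj, hkj⟩
          · exact ⟨hx, hkx⟩
      rw [hins, Finset.prod_insert (by simp)]
    · rw [if_neg hkj, one_mul]
      congr 1
      ext x
      simp only [mem_filter, mem_erase]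
      constructor
      · rintro ⟨hx, hkx⟩
        refine ⟨⟨?_, hx⟩, hkx⟩
        rintro rfl; exact hkj hkx
      · rintro ⟨⟨_, hx⟩, hkx⟩; exact ⟨hx, hkx⟩
  rw [Finset.prod_congr rfl h1, Finset.prod_mul_distrib]
  have h2 : (∏ k ∈ s.erase j, if k < j then f k j else 1)
      = ∏ k ∈ (s.erase j).filter (fun k => k < j), f j k := by
    rw [Finset.prod_filter]
    exact Finset.prod_congr rfl fun k _ => by by_cases h : k < j <;> simp [h, hf k j]
  have h3 : s.filter (fun l => j < l) = (s.erase j).filter (fun l => j < l) := by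
    ext x
    simp only [mem_filter, mem_erase]
    constructor
    · rintro ⟨hx, hjx⟩; exact ⟨⟨ne_of_gt hjx, hx⟩, hjx⟩
    · rintro ⟨⟨_, hx⟩, hjx⟩; exact ⟨hx, hjx⟩
  rw [h2, h3, ← mul_assoc]
  congr 1
  rw [← Finset.prod_filter_mul_prod_filter_not (s.erase j) (fun l => j < l) (f j)]
  congr 1
  apply Finset.prod_congr _ (fun _ _ => rfl)
  ext x
  simp only [mem_filter, mem_erase, not_lt]
  constructor
  · rintro ⟨⟨hxj, hx⟩, hlt⟩; exact ⟨⟨hxj, hx⟩, le_of_lt hlt⟩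
  · rintro ⟨⟨hxj, hx⟩, hlt⟩; exact ⟨⟨hxj, hx⟩, lt_of_le_of_ne hlt hxj⟩

/-- Extract the minimum from a product over ordered pairs (no symmetry needed). -/
theorem prod_pairs_extract_min (s : Finset ι) (f : ι → ι → M) (j : ι) (hj : j ∈ s)
    (hmin : ∀ k ∈ s, k ≠ j → j < k) :
    (∏ k ∈ s, ∏ l ∈ s.filter (fun l => k < l), f k l)
      = (∏ l ∈ s.erase j, f j l) *
        ∏ k ∈ s.erase j, ∏ l ∈ (s.erase j).filter (fun l => k < l), f k l := by
  rw [← Finset.mul_prod_erase s _ hj]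
  congr 1
  · apply Finset.prod_congr _ (fun _ _ => rfl)
    ext x
    simp only [mem_filter, mem_erase]
    constructor
    · rintro ⟨hx, hjx⟩; exact ⟨ne_of_gt hjx, hx⟩
    · rintro ⟨hxj, hx⟩; exact ⟨hx, hmin x hx hxj⟩
  · apply Finset.prod_congr rfl
    intro k hk
    apply Finset.prod_congr _ (fun _ _ => rfl)
    ext x
    simp only [mem_filter, mem_erase]
    rw [mem_erase] at hk
    constructor
    · rintro ⟨hx, hkx⟩
      refine ⟨⟨?_, hx⟩, hkx⟩
      rintro rfl
      exact absurd hkx (not_lt.mpr (le_of_lt (hmin k hk.2 hk.1)))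
    · rintro ⟨⟨_, hx⟩, hkx⟩; exact ⟨hx, hkx⟩

/-- Reindex a product over ordered pairs along a strictly monotone map. -/
theorem prod_pairs_reindex (s u : Finset ι) (e : ι → ι)
    (hmono : ∀ k ∈ s, ∀ l ∈ s, (k < l ↔ e k < e l)) (himg : s.image e = u)
    (f : ι → ι → M) :
    (∏ k ∈ u, ∏ l ∈ u.filter (fun l => k < l), f k l)
      = ∏ k ∈ s, ∏ l ∈ s.filter (fun l => k < l), f (e k) (e l) := by
  have hinj : Set.InjOn e s := by
    intro x hx y hy hxy
    rcases lt_trichotomy x y with h | h | h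
    · exact absurd hxy (ne_of_lt ((hmono x hx y hy).mp h))
    · exact h
    · exact absurd hxy.symm (ne_of_lt ((hmono y hy x hx).mp h))
  rw [← himg, Finset.prod_image (fun x hx y hy => hinj hx hy)]
  apply Finset.prod_congr rfl
  intro k hk
  have hfilt : (s.image e).filter (fun l => e k < l)
      = (s.filter (fun l => k < l)).image e := by
    ext x
    simp only [mem_filter, mem_image]
    constructor
    · rintro ⟨⟨y, hy, rfl⟩, hlt⟩
      exact ⟨y, ⟨hy, (hmono k hk y hy).mpr hlt⟩, rfl⟩
    · rintro ⟨y, ⟨hy, hlt⟩, rfl⟩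
      exact ⟨⟨y, hy, rfl⟩, (hmono k hk y hy).mp hlt⟩
  rw [hfilt, Finset.prod_image (fun x hx y hy => hinj (mem_filter.mp hx).1 (mem_filter.mp hy).1)]

/-- Extend a triangular grid product by one (trivial) antidiagonal. -/
theorem grid_extend (n : ℕ) (X : ℕ → ℕ → M) (h : ∀ i j, i + j = n → X i j = 1) :
    (∏ i ∈ range (n + 1), ∏ j ∈ range (n + 1 - i), X i j)
      = ∏ i ∈ range n, ∏ j ∈ range (n - i), X i j := by
  rw [Finset.prod_range_succ]
  have h2 : (∏ j ∈ range (n + 1 - n), X n j) = 1 := by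
    have : n + 1 - n = 1 := by omega
    rw [this]
    simp [h n 0 (by omega)]
  rw [h2, mul_one]
  apply Finset.prod_congr rfl
  intro i hi
  rw [mem_range] at hi
  have : n + 1 - i = (n - i) + 1 := by omega
  rw [this, Finset.prod_range_succ, h i (n - i) (by omega), mul_one]

/-- Convert a double product over `Fin m` pairs to a product over `range m`. -/
theorem fin_pairs_to_range (m : ℕ) (f : ℕ → ℕ → M) :
    (∏ k : Fin m, ∏ l ∈ univ.filter (fun l => k < l), f k l)
      = ∏ k ∈ range m, ∏ l ∈ (range m).filter (fun l => k < l), f k l := by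
  rw [← Fin.prod_univ_eq_prod_range (fun k => ∏ l ∈ (range m).filter (fun l => k < l), f k l) m]
  apply Finset.prod_congr rfl
  intro k _
  rw [Finset.prod_filter, Finset.prod_filter,
    ← Fin.prod_univ_eq_prod_range (fun l => if (k : ℕ) < l then f k l else 1) m]
  apply Finset.prod_congr rfl
  intro l _
  by_cases h : k < l
  · rw [if_pos h, if_pos (by exact_mod_cast h)]
  · rw [if_neg h, if_neg (by exact_mod_cast h)]

/-- Convert a filtered product over `Fin m` to one over `range m`. -/
theorem fin_filter_prod_to_range (m : ℕ) (P : ℕ → Prop) [DecidablePred P] (f : ℕ → M) :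
    (∏ k ∈ (univ : Finset (Fin m)).filter (fun k : Fin m => P (k : ℕ)), f (k : ℕ))
      = ∏ k ∈ (range m).filter P, f k := by
  rw [Finset.prod_filter, Finset.prod_filter,
    ← Fin.prod_univ_eq_prod_range (fun k => if P k then f k else 1) m]

theorem fin_double_filter_to_range (m : ℕ) (P : ℕ → Prop) [DecidablePred P]
    (Q : ℕ → ℕ → Prop) [∀ k, DecidablePred (Q k)] (f : ℕ → ℕ → M) :
    (∏ k ∈ (univ : Finset (Fin m)).filter (fun k : Fin m => P (k : ℕ)),
        ∏ l ∈ (univ : Finset (Fin m)).filter (fun l : Fin m => Q (k : ℕ) (l : ℕ)), f (k : ℕ) (l : ℕ))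
      = ∏ k ∈ (range m).filter P, ∏ l ∈ (range m).filter (Q k), f k l := by
  calc (∏ k ∈ (univ : Finset (Fin m)).filter (fun k : Fin m => P (k : ℕ)),
        ∏ l ∈ (univ : Finset (Fin m)).filter (fun l : Fin m => Q (k : ℕ) (l : ℕ)), f (k : ℕ) (l : ℕ))
      = ∏ k ∈ (univ : Finset (Fin m)).filter (fun k : Fin m => P (k : ℕ)),
          ∏ l ∈ (range m).filter (Q (k : ℕ)), f (k : ℕ) l :=
        Finset.prod_congr rfl fun k _ => fin_filter_prod_to_range m (Q (k : ℕ)) (f (k : ℕ))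
    _ = _ := fin_filter_prod_to_range m P (fun k => ∏ l ∈ (range m).filter (Q k), f k l)

theorem fin_double_to_range (m : ℕ)
    (Q : ℕ → ℕ → Prop) [∀ k, DecidablePred (Q k)] (f : ℕ → ℕ → M) :
    (∏ k : Fin m,
        ∏ l ∈ (univ : Finset (Fin m)).filter (fun l : Fin m => Q (k : ℕ) (l : ℕ)), f (k : ℕ) (l : ℕ))
      = ∏ k ∈ range m, ∏ l ∈ (range m).filter (Q k), f k l := by
  calc (∏ k : Fin m,
        ∏ l ∈ (univ : Finset (Fin m)).filter (fun l : Fin m => Q (k : ℕ) (l : ℕ)), f (k : ℕ) (l : ℕ))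
      = ∏ k : Fin m, ∏ l ∈ (range m).filter (Q (k : ℕ)), f (k : ℕ) l :=
        Finset.prod_congr rfl fun k _ => fin_filter_prod_to_range m (Q (k : ℕ)) (f (k : ℕ))
    _ = _ := Fin.prod_univ_eq_prod_range (fun k => ∏ l ∈ (range m).filter (Q k), f k l) m

/-- Total extension of a function on `Fin m` to `ℕ`. -/
def extA (m : ℕ) (f : Fin m → ℂ) : ℕ → ℂ := fun k => if h : k < m then f ⟨k, h⟩ else 1

lemma extA_coe (m : ℕ) (f : Fin m → ℂ) (k : Fin m) : f k = extA m f (k : ℕ) := by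
  simp [extA]

lemma extA_lt (m : ℕ) (f : Fin m → ℂ) (k : ℕ) (h : k < m) : extA m f k = f ⟨k, h⟩ := by
  simp [extA, h]

/-- Ledger identity for the `Γ(t^i)` family (Pascal's rule). -/
lemma ledger1 (g : ℕ → ℂ) (N r : ℕ) (hr : 2 ≤ r) :
    (∏ i ∈ range N, g (i + 1) ^ ((N + 1 - (i + 1) + r - 2).choose (r - 1)))
      * ∏ i ∈ range (N + 1), g (i + 1) ^ ((N + 1 - (i + 1) + r - 2).choose (r - 2))
    = g 1 ^ ((N + 1 + r - 2).choose (r - 1))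
      * ∏ i ∈ range N, g (i + 2) ^ ((N - i + r - 2).choose (r - 1)) := by
  have h1 : (∏ i ∈ range N, g (i + 1) ^ ((N + 1 - (i + 1) + r - 2).choose (r - 1)))
      = ∏ i ∈ range (N + 1), g (i + 1) ^ ((N + 1 - (i + 1) + r - 2).choose (r - 1)) := by
    rw [Finset.prod_range_succ]
    have : (N + 1 - (N + 1) + r - 2).choose (r - 1) = 0 :=
      Nat.choose_eq_zero_of_lt (by omega)
    rw [this, pow_zero, mul_one]
  rw [h1, ← Finset.prod_mul_distrib]
  have h2 : ∀ i ∈ range (N + 1),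
      g (i + 1) ^ ((N + 1 - (i + 1) + r - 2).choose (r - 1))
        * g (i + 1) ^ ((N + 1 - (i + 1) + r - 2).choose (r - 2))
      = g (i + 1) ^ ((N + 1 - i + r - 2).choose (r - 1)) := by
    intro i hi
    rw [mem_range] at hi
    rw [← pow_add]
    congr 1
    have e1 : N + 1 - i + r - 2 = (N + 1 - (i + 1) + r - 2) + 1 := by omega
    have e2 : r - 1 = (r - 2) + 1 := by omega
    rw [e1, e2, Nat.choose_succ_succ]
    simp only [Nat.succ_eq_add_one, ← e2]
    omega
  rw [Finset.prod_congr rfl h2, Finset.prod_range_succ', mul_comm]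
  congr 1
  refine Finset.prod_congr rfl fun i hi => ?_
  rw [mem_range] at hi
  have e4 : i + 1 + 1 = i + 2 := rfl
  have e5 : N + 1 - (i + 1) + r - 2 = N - i + r - 2 := by omega
  rw [e4, e5]

/-- Ledger identity for the `Γ(t^i ã_k ã_l)` family. -/
lemma ledger3 (PP : ℕ → ℕ → ℂ) (N r : ℕ) (hr : 2 ≤ r)
    (hmul : ∀ i a b, PP i (a + b) = PP i a * PP i b)
    (hzero : ∀ i, PP i 0 = 1) :
    (∏ i ∈ range (N + 1), PP i ((N + 1 - i + r - 2).choose (r - 1)))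
    = (∏ i ∈ range (N + 1), PP i ((N + 1 - i + r - 3).choose (r - 2)))
      * ∏ i ∈ range N, PP i ((N - i + r - 2).choose (r - 1)) := by
  have h1 : (∏ i ∈ range N, PP i ((N - i + r - 2).choose (r - 1)))
      = ∏ i ∈ range (N + 1), PP i ((N - i + r - 2).choose (r - 1)) := by
    rw [Finset.prod_range_succ]
    have : (N - N + r - 2).choose (r - 1) = 0 := Nat.choose_eq_zero_of_lt (by omega)
    rw [this, hzero, mul_one]
  rw [h1, ← Finset.prod_mul_distrib]
  apply Finset.prod_congr rfl
  intro i hi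
  rw [mem_range] at hi
  rw [← hmul]
  congr 1
  have e1 : N + 1 - i + r - 2 = (N + 1 - i + r - 3) + 1 := by omega
  have e2 : r - 1 = (r - 2) + 1 := by omega
  have e3 : N - i + r - 2 = N + 1 - i + r - 3 := by omega
  rw [e1, e2, Nat.choose_succ_succ]
  simp only [Nat.succ_eq_add_one, ← e2, e3]

/-- Ledger identity for the inner-pair `e`-factor family. -/
lemma ledger4 (W : ℕ → ℕ → ℕ → ℂ) (N r : ℕ)
    (hPascal : ∀ i j, i + j ≤ N →
      W i j ((N + 1 - i - j + r - 3).choose (r - 2))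
        = W i j ((N + 1 - i - j + r - 4).choose (r - 3))
          * W i j ((N - i - j + r - 3).choose (r - 2)))
    (hTriv : ∀ i j, i + j = N → W i j ((N - i - j + r - 3).choose (r - 2)) = 1) :
    (∏ i ∈ range (N + 1), ∏ j ∈ range (N + 1 - i),
        W i j ((N + 1 - i - j + r - 3).choose (r - 2)))
    = (∏ i ∈ range (N + 1), ∏ j ∈ range (N + 1 - i),
        W i j ((N + 1 - i - j + r - 4).choose (r - 3)))
      * ∏ i ∈ range N, ∏ j ∈ range (N - i),
          W i j ((N - i - j + r - 3).choose (r - 2)) := by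
  have h1 : ∀ i ∈ range (N + 1), ∀ j ∈ range (N + 1 - i),
      W i j ((N + 1 - i - j + r - 3).choose (r - 2))
        = W i j ((N + 1 - i - j + r - 4).choose (r - 3))
          * W i j ((N - i - j + r - 3).choose (r - 2)) := by
    intro i hi j hj
    rw [mem_range] at hi hj
    exact hPascal i j (by omega)
  calc (∏ i ∈ range (N + 1), ∏ j ∈ range (N + 1 - i),
        W i j ((N + 1 - i - j + r - 3).choose (r - 2)))
      = ∏ i ∈ range (N + 1), ∏ j ∈ range (N + 1 - i),
          (W i j ((N + 1 - i - j + r - 4).choose (r - 3))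
            * W i j ((N - i - j + r - 3).choose (r - 2))) := by
        refine Finset.prod_congr rfl fun i hi => Finset.prod_congr rfl fun j hj => h1 i hi j hj
    _ = (∏ i ∈ range (N + 1), ∏ j ∈ range (N + 1 - i),
          W i j ((N + 1 - i - j + r - 4).choose (r - 3)))
        * ∏ i ∈ range (N + 1), ∏ j ∈ range (N + 1 - i),
            W i j ((N - i - j + r - 3).choose (r - 2)) := by
        rw [← Finset.prod_mul_distrib]
        exact Finset.prod_congr rfl fun i _ => Finset.prod_mul_distrib
    _ = _ := by
        congr 1
        exact grid_extend N _ (fun i j hij => hTriv i j hij)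
set_option maxHeartbeats 2000000 in
/-- the recursion satisfied by `L̃_{r,n}` in terms of
`L_{r-1,n}` and `L_{r,n-1}`. -/
theorem Ltilde_recursion (r n : ℕ) (hr : 2 ≤ r) (hn : 1 ≤ n)
    (p q t : ℂ) (hp0 : p ≠ 0) (hq0 : q ≠ 0)
    (hp : ‖p‖ < 1) (hq : ‖q‖ < 1) (ht : t ≠ 0)
    (a : Fin (2 * r + 4) → ℂ) (ha : ∀ k, a k ≠ 0)
    (hppqq : poch p p * poch q q ≠ 0)
    (ht1 : ∀ i : ℕ, 1 ≤ i → i ≤ 2 * n → t ^ i ≠ 1)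
    (hne : ∀ i : ℕ, i ≤ 2 * n → ∀ k l : Fin (2 * r + 4),
      ¬((k : ℕ) = 0 ∧ (l : ℕ) = r) → ¬((k : ℕ) = r ∧ (l : ℕ) = 0) →
      t ^ i * (Atld p q t r n a k * Atld p q t r n a l) ≠ 1)
    (hgam : ∀ i : ℕ, i ≤ 2 * n → ∀ k l : Fin (2 * r + 4),
      t ^ i * (Atld p q t r n a k * Atld p q t r n a l) ≠ 1 →
      ellGamma (t ^ i * (Atld p q t r n a k * Atld p q t r n a l)) p q ≠ 0)
    (hefac : ∀ i j : ℕ, i ≤ n → j ≤ n → ∀ k l : Fin (2 * r + 4), k ≠ l →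
      efun p t (t ^ i * Atld p q t r n a k) (t ^ j * Atld p q t r n a l) ≠ 0 ∧
      efun q t (t ^ i * Atld p q t r n a k) (t ^ j * Atld p q t r n a l) ≠ 0) :
    ((∏ i ∈ Finset.range (n - 1),
        ellGamma (t ^ (i + 1)) p q ^ ((n - (i + 1) + r - 2).choose (r - 1)))
      / (poch p p * poch q q) ^ ((n + r - 2).choose (r - 1)))
    * (∏ i ∈ Finset.range n,
        ∏ k ∈ Finset.univ.filter (fun k : Fin (2 * r + 4) => (k : ℕ) ≠ 0 ∧ (k : ℕ) ≠ r),
          (ellGamma (t ^ i * (a 0 * Atld p q t r n a k)) p q *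
            ellGamma (t ^ i * (Atld p q t r n a k / a 0)) p q)
            ^ ((n - i + r - 2).choose (r - 1)))
    * ((∏ i ∈ Finset.range n,
          ∏ k ∈ Finset.univ.filter (fun k : Fin (2 * r + 4) => (k : ℕ) ≠ 0 ∧ (k : ℕ) ≠ r),
            ∏ l ∈ Finset.univ.filter
                (fun l : Fin (2 * r + 4) => k < l ∧ (l : ℕ) ≠ 0 ∧ (l : ℕ) ≠ r),
              ellGamma (t ^ i * (Atld p q t r n a k * Atld p q t r n a l)) p q
                ^ ((n - i + r - 2).choose (r - 1)))
        / ∏ i ∈ Finset.range n, ∏ j ∈ Finset.range (n - i), ∏ k : Fin r,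
            ∏ l ∈ Finset.univ.filter (fun l => k < l),
              (efun p t (t ^ i * a (Fin.castLE (by omega) k))
                  (t ^ j * a (Fin.castLE (by omega) l)) *
                efun q t (t ^ i * a (Fin.castLE (by omega) k))
                  (t ^ j * a (Fin.castLE (by omega) l)))
                ^ ((n - i - j + r - 3).choose (r - 2)))
    = ((poch p p * poch q q) ^ ((n + r - 2).choose (r - 1)))⁻¹
      * (ellGamma t p q ^ ((n + r - 2).choose (r - 1))
          / ∏ i ∈ Finset.range n,
              ellGamma (t ^ (i + 1)) p q ^ ((n - (i + 1) + r - 2).choose (r - 2)))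
      * ((∏ k ∈ Finset.univ.filter (fun k : Fin (2 * r + 4) => (k : ℕ) ≠ 0 ∧ (k : ℕ) ≠ r),
            (ellGamma (a 0 * Atld p q t r n a k) p q *
              ellGamma (Atld p q t r n a k / a 0) p q) ^ ((n + r - 2).choose (r - 1)))
          / ∏ j ∈ Finset.range n, ∏ l ∈ Finset.univ.filter (fun l : Fin r => (l : ℕ) ≠ 0),
              (efun p t (a 0) (t ^ j * a (Fin.castLE (by omega) l)) *
                efun q t (a 0) (t ^ j * a (Fin.castLE (by omega) l)))
                ^ ((n - j + r - 3).choose (r - 2)))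
      * Lfun p q t (r - 1) n (Bvec p q t r n a)
      * Lfun p q t r (n - 1) (Ashift p q t r n a) := by

  obtain ⟨N, rfl⟩ : ∃ N, n = N + 1 := ⟨n - 1, by omega⟩
  simp only [Nat.add_sub_cancel]

  have hcastG : ∀ (h : r ≤ 2 * r + 4) (k : Fin r), a (Fin.castLE h k) = extA (2 * r + 4) a (k : ℕ) := by
    intro h k
    rw [extA_lt (2 * r + 4) a (k : ℕ) (by omega)]
    rfl
  have h00 : (0 : Fin (2 * r + 4)) = ⟨0, by omega⟩ := by
    haveI : NeZero (2 * r + 4) := ⟨by omega⟩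
    exact Fin.ext (by simp)
  have ha0ext : a 0 = t ^ (0 : ℕ) * extA (2 * r + 4) a 0 := by
    rw [pow_zero, one_mul, extA_lt (2 * r + 4) a 0 (by omega), ← h00]
  have hvalmk : ∀ (x : ℕ) (h : x < 2 * r + 4), ((⟨x, h⟩ : Fin (2 * r + 4)) : ℕ) = x :=
    fun x h => rfl
  have hGt_ne : ∀ i : ℕ, 1 ≤ i → i ≤ 2 * (N + 1) → ellGamma (t ^ i) p q ≠ 0 := by
    intro i h1 h2
    have hk0 : Atld p q t r (N + 1) a ⟨0, by omega⟩ = a 0 := by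
      simp only [Atld, hvalmk]
      rw [if_neg (by omega), if_neg (by omega), ← h00]
    have hkr : Atld p q t r (N + 1) a ⟨r, by omega⟩ = (a 0)⁻¹ := by
      simp [Atld, hvalmk]
    have harg : t ^ i * (Atld p q t r (N + 1) a ⟨0, by omega⟩ *
        Atld p q t r (N + 1) a ⟨r, by omega⟩) = t ^ i := by
      rw [hk0, hkr, mul_inv_cancel₀ (ha 0), mul_one]
    have hne1 := hgam i h2 ⟨0, by omega⟩ ⟨r, by omega⟩ (by rw [harg]; exact ht1 i h1 h2)
    rwa [harg] at hne1
  have hEE_ne : ∀ i j u v : ℕ, i ≤ N + 1 → j ≤ N + 1 → u < r → v < r → u ≠ v →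
      efun p t (t ^ i * extA (2 * r + 4) a u) (t ^ j * extA (2 * r + 4) a v) *
        efun q t (t ^ i * extA (2 * r + 4) a u) (t ^ j * extA (2 * r + 4) a v) ≠ 0 := by
    intro i j u v hi hj hu hv huv
    have hAu : Atld p q t r (N + 1) a ⟨u, by omega⟩ = extA (2 * r + 4) a u := by
      simp only [Atld, hvalmk]
      rw [if_neg (by omega), if_neg (by omega), extA_lt (2 * r + 4) a u (by omega)]
    have hAv : Atld p q t r (N + 1) a ⟨v, by omega⟩ = extA (2 * r + 4) a v := by
      simp only [Atld, hvalmk]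
      rw [if_neg (by omega), if_neg (by omega), extA_lt (2 * r + 4) a v (by omega)]
    obtain ⟨h1, h2⟩ := hefac i j hi hj ⟨u, by omega⟩ ⟨v, by omega⟩
      (by intro hh; exact huv (by simpa [Fin.ext_iff] using hh))
    rw [hAu, hAv] at h1 h2
    exact mul_ne_zero h1 h2
  have hVE : (Finset.range r).erase 0 = (Finset.range r).filter (fun k => k ≠ 0) := by
    ext x
    simp only [Finset.mem_erase, Finset.mem_filter]
    tauto
  have ha0G : extA (2 * r + 4) a 0 = a 0 := by
    rw [extA_lt (2 * r + 4) a 0 (by omega), ← h00]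
  have hF1 : (∏ i ∈ Finset.range (N + 1),
        ∏ k ∈ Finset.univ.filter (fun k : Fin (2 * r + 4) => (k : ℕ) ≠ 0 ∧ (k : ℕ) ≠ r),
          (ellGamma (t ^ i * (a 0 * Atld p q t r (N + 1) a k)) p q *
            ellGamma (t ^ i * (Atld p q t r (N + 1) a k / a 0)) p q)
            ^ ((N + 1 - i + r - 2).choose (r - 1)))
      = (∏ i ∈ Finset.range (N + 1), ∏ k ∈ (Finset.range (2 * r + 4)).filter (fun k => k ≠ 0 ∧ k ≠ r), (ellGamma (t ^ (i) * (a 0 * extA (2 * r + 4) (Atld p q t r (N + 1) a) k)) p q * ellGamma (t ^ (i) * (extA (2 * r + 4) (Atld p q t r (N + 1) a) k / a 0)) p q) ^ ((N + 1 - i + r - 2).choose (r - 1))) := by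
    refine Finset.prod_congr rfl fun i _ => ?_
    simp only [extA_coe (2 * r + 4) (Atld p q t r (N + 1) a)]
    exact fin_filter_prod_to_range (2 * r + 4) (fun k => k ≠ 0 ∧ k ≠ r)
      (fun k => (ellGamma (t ^ i * (a 0 * extA (2 * r + 4) (Atld p q t r (N + 1) a) k)) p q *
        ellGamma (t ^ i * (extA (2 * r + 4) (Atld p q t r (N + 1) a) k / a 0)) p q) ^ ((N + 1 - i + r - 2).choose (r - 1)))
  have hF2 : (∏ i ∈ Finset.range (N + 1),
          ∏ k ∈ Finset.univ.filter (fun k : Fin (2 * r + 4) => (k : ℕ) ≠ 0 ∧ (k : ℕ) ≠ r),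
            ∏ l ∈ Finset.univ.filter
                (fun l : Fin (2 * r + 4) => k < l ∧ (l : ℕ) ≠ 0 ∧ (l : ℕ) ≠ r),
              ellGamma (t ^ i * (Atld p q t r (N + 1) a k * Atld p q t r (N + 1) a l)) p q
                ^ ((N + 1 - i + r - 2).choose (r - 1)))
      = (∏ i ∈ Finset.range (N + 1), ∏ k ∈ (Finset.range (2 * r + 4)).filter (fun k => k ≠ 0 ∧ k ≠ r), ∏ l ∈ ((Finset.range (2 * r + 4)).filter (fun k => k ≠ 0 ∧ k ≠ r)).filter (fun l => k < l), ellGamma (t ^ (i) * (extA (2 * r + 4) (Atld p q t r (N + 1) a) k * extA (2 * r + 4) (Atld p q t r (N + 1) a) l)) p q ^ ((N + 1 - i + r - 2).choose (r - 1))) := by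
    refine Finset.prod_congr rfl fun i _ => ?_
    simp only [extA_coe (2 * r + 4) (Atld p q t r (N + 1) a), Fin.lt_def]
    rw [fin_double_filter_to_range (2 * r + 4) (fun k => k ≠ 0 ∧ k ≠ r)
      (fun k l => k < l ∧ l ≠ 0 ∧ l ≠ r)
      (fun k l => ellGamma (t ^ i * (extA (2 * r + 4) (Atld p q t r (N + 1) a) k * extA (2 * r + 4) (Atld p q t r (N + 1) a) l)) p q ^ ((N + 1 - i + r - 2).choose (r - 1)))]
    refine Finset.prod_congr rfl fun k _ => ?_
    refine Finset.prod_congr ?_ fun _ _ => rfl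
    ext x
    simp only [Finset.mem_filter, Finset.mem_range]
    tauto
  have hF3 : (∏ i ∈ Finset.range (N + 1), ∏ j ∈ Finset.range (N + 1 - i), ∏ k : Fin r,
            ∏ l ∈ Finset.univ.filter (fun l => k < l),
              (efun p t (t ^ i * a (Fin.castLE (by omega) k))
                  (t ^ j * a (Fin.castLE (by omega) l)) *
                efun q t (t ^ i * a (Fin.castLE (by omega) k))
                  (t ^ j * a (Fin.castLE (by omega) l)))
                ^ ((N + 1 - i - j + r - 3).choose (r - 2)))
      = (∏ i ∈ Finset.range (N + 1), ∏ j ∈ Finset.range (N + 1 - i), ∏ u ∈ Finset.range r, ∏ v ∈ (Finset.range r).filter (fun v => u < v), (efun p t (t ^ (i) * extA (2 * r + 4) a (u)) (t ^ (j) * extA (2 * r + 4) a (v)) * efun q t (t ^ (i) * extA (2 * r + 4) a (u)) (t ^ (j) * extA (2 * r + 4) a (v))) ^ ((N + 1 - i - j + r - 3).choose (r - 2))) := by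
    refine Finset.prod_congr rfl fun i _ => Finset.prod_congr rfl fun j _ => ?_
    simp only [hcastG, Fin.lt_def]
    exact fin_double_to_range r (fun u v => u < v)
      (fun u v => (efun p t (t ^ i * extA (2 * r + 4) a u) (t ^ j * extA (2 * r + 4) a v) *
        efun q t (t ^ i * extA (2 * r + 4) a u) (t ^ j * extA (2 * r + 4) a v)) ^ ((N + 1 - i - j + r - 3).choose (r - 2)))
  have hF4 : (∏ k ∈ Finset.univ.filter (fun k : Fin (2 * r + 4) => (k : ℕ) ≠ 0 ∧ (k : ℕ) ≠ r),
            (ellGamma (a 0 * Atld p q t r (N + 1) a k) p q *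
              ellGamma (Atld p q t r (N + 1) a k / a 0) p q) ^ ((N + 1 + r - 2).choose (r - 1)))
      = (∏ k ∈ (Finset.range (2 * r + 4)).filter (fun k => k ≠ 0 ∧ k ≠ r), (ellGamma (t ^ (0) * (a 0 * extA (2 * r + 4) (Atld p q t r (N + 1) a) k)) p q * ellGamma (t ^ (0) * (extA (2 * r + 4) (Atld p q t r (N + 1) a) k / a 0)) p q) ^ ((N + 1 - 0 + r - 2).choose (r - 1))) := by
    simp only [extA_coe (2 * r + 4) (Atld p q t r (N + 1) a)]
    rw [fin_filter_prod_to_range (2 * r + 4) (fun k => k ≠ 0 ∧ k ≠ r)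
      (fun k => (ellGamma (a 0 * extA (2 * r + 4) (Atld p q t r (N + 1) a) k) p q *
        ellGamma (extA (2 * r + 4) (Atld p q t r (N + 1) a) k / a 0) p q) ^ ((N + 1 + r - 2).choose (r - 1)))]
    refine Finset.prod_congr rfl fun k _ => ?_
    simp only [pow_zero, one_mul, Nat.sub_zero]
  have hF5 : (∏ j ∈ Finset.range (N + 1), ∏ l ∈ Finset.univ.filter (fun l : Fin r => (l : ℕ) ≠ 0),
              (efun p t (a 0) (t ^ j * a (Fin.castLE (by omega) l)) *
                efun q t (a 0) (t ^ j * a (Fin.castLE (by omega) l)))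
                ^ ((N + 1 - j + r - 3).choose (r - 2)))
      = (∏ j ∈ Finset.range (N + 1), ∏ v ∈ (Finset.range r).filter (fun k => k ≠ 0), (efun p t (t ^ (0) * extA (2 * r + 4) a (0)) (t ^ (j) * extA (2 * r + 4) a (v)) * efun q t (t ^ (0) * extA (2 * r + 4) a (0)) (t ^ (j) * extA (2 * r + 4) a (v))) ^ ((N + 1 - j + r - 3).choose (r - 2))) := by
    refine Finset.prod_congr rfl fun j _ => ?_
    simp only [hcastG]
    rw [fin_filter_prod_to_range r (fun v => v ≠ 0)
      (fun v => (efun p t (a 0) (t ^ j * extA (2 * r + 4) a v) *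
        efun q t (a 0) (t ^ j * extA (2 * r + 4) a v)) ^ ((N + 1 - j + r - 3).choose (r - 2)))]
    refine Finset.prod_congr rfl fun v _ => ?_
    rw [ha0ext]
  have hF6 : Lfun p q t (r - 1) (N + 1) (Bvec p q t r (N + 1) a) = (∏ i ∈ Finset.range (N + 1), ∏ k ∈ (Finset.range (2 * r + 4)).filter (fun k => k ≠ 0 ∧ k ≠ r), ∏ l ∈ ((Finset.range (2 * r + 4)).filter (fun k => k ≠ 0 ∧ k ≠ r)).filter (fun l => k < l), ellGamma (t ^ (i) * (extA (2 * r + 4) (Atld p q t r (N + 1) a) k * extA (2 * r + 4) (Atld p q t r (N + 1) a) l)) p q ^ ((N + 1 - i + r - 3).choose (r - 2))) / (∏ i ∈ Finset.range (N + 1), ∏ j ∈ Finset.range (N + 1 - i), ∏ u ∈ (Finset.range r).filter (fun k => k ≠ 0), ∏ v ∈ ((Finset.range r).filter (fun k => k ≠ 0)).filter (fun v => u < v), (efun p t (t ^ (i) * extA (2 * r + 4) a (u)) (t ^ (j) * extA (2 * r + 4) a (v)) * efun q t (t ^ (i) * extA (2 * r + 4) a (u)) (t ^ (j) * extA (2 *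 r + 4) a (v))) ^ ((N + 1 - i - j + r - 4).choose (r - 3))) := by
    unfold Lfun
    have hnum : (∏ i ∈ Finset.range (N + 1), ∏ k : Fin (2 * (r - 1) + 4),
        ∏ l ∈ Finset.univ.filter (fun l => k < l),
          ellGamma (t ^ i * (Bvec p q t r (N + 1) a k * Bvec p q t r (N + 1) a l)) p q
            ^ ((N + 1 - i + (r - 1) - 2).choose (r - 1 - 1)))
        = (∏ i ∈ Finset.range (N + 1), ∏ k ∈ (Finset.range (2 * r + 4)).filter (fun k => k ≠ 0 ∧ k ≠ r), ∏ l ∈ ((Finset.range (2 * r + 4)).filter (fun k => k ≠ 0 ∧ k ≠ r)).filter (fun l => k < l),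
            ellGamma (t ^ (i) * (extA (2 * r + 4) (Atld p q t r (N + 1) a) k * extA (2 * r + 4) (Atld p q t r (N + 1) a) l)) p q ^ ((N + 1 - i + r - 3).choose (r - 2))) := by
      have hmono : ∀ k ∈ Finset.range (2 * (r - 1) + 4), ∀ l ∈ Finset.range (2 * (r - 1) + 4),
          (k < l ↔ (if k < r - 1 then k + 1 else k + 2) < (if l < r - 1 then l + 1 else l + 2)) := by
        intro k hk l hl
        by_cases h1 : k < r - 1 <;> by_cases h2 : l < r - 1 <;> simp [h1, h2] <;> omega
      have himg : (Finset.range (2 * (r - 1) + 4)).image (fun x => if x < r - 1 then x + 1 else x + 2)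
          = (Finset.range (2 * r + 4)).filter (fun k => k ≠ 0 ∧ k ≠ r) := by
        ext y
        simp only [Finset.mem_image, Finset.mem_range, Finset.mem_filter]
        constructor
        · rintro ⟨x, hx, rfl⟩
          by_cases h1 : x < r - 1 <;> simp [h1] <;> omega
        · rintro ⟨hy, hy0, hyr⟩
          by_cases h1 : y ≤ r - 1
          · exact ⟨y - 1, by omega, by rw [if_pos (by omega)]; omega⟩
          · exact ⟨y - 2, by omega, by rw [if_neg (by omega)]; omega⟩
      have hBF : ∀ x : ℕ, x < 2 * (r - 1) + 4 → extA (2 * (r - 1) + 4) (Bvec p q t r (N + 1) a) x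
          = extA (2 * r + 4) (Atld p q t r (N + 1) a) (if x < r - 1 then x + 1 else x + 2) := by
        intro x hx
        rw [extA_lt _ _ x hx]
        by_cases h1 : x < r - 1
        · rw [if_pos h1, extA_lt _ _ (x + 1) (by omega)]
          simp only [Bvec, Atld]
          rw [dif_pos (by exact h1), if_neg (by first | omega | (simp only [hvalmk]; omega) | (simp; omega)), if_neg (by first | omega | (simp only [hvalmk]; omega) | (simp; omega))]
        · by_cases h2 : x < 2 * r + 1
          · rw [if_neg h1, extA_lt _ _ (x + 2) (by omega)]
            simp only [Bvec, Atld]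
            rw [dif_neg (by exact h1), dif_pos (by exact h2), if_neg (by first | omega | (simp only [hvalmk]; omega) | (simp; omega)),
              if_neg (by first | omega | (simp only [hvalmk]; omega) | (simp; omega))]
          · rw [if_neg h1, extA_lt _ _ (x + 2) (by omega)]
            simp only [Bvec, Atld]
            rw [dif_neg (by exact h1), dif_neg (by exact h2), if_neg (by first | omega | (simp only [hvalmk]; omega) | (simp; omega)),
              if_pos (by first | omega | (simp only [hvalmk]; omega) | (simp; omega))]
      refine Finset.prod_congr rfl fun i _ => ?_
      simp only [extA_coe (2 * (r - 1) + 4) (Bvec p q t r (N + 1) a), Fin.lt_def]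
      rw [fin_double_to_range (2 * (r - 1) + 4) (fun u v => u < v)
        (fun u v => ellGamma (t ^ i * (extA (2 * (r - 1) + 4) (Bvec p q t r (N + 1) a) u * extA (2 * (r - 1) + 4) (Bvec p q t r (N + 1) a) v)) p q
          ^ ((N + 1 - i + (r - 1) - 2).choose (r - 1 - 1)))]
      rw [prod_pairs_reindex (Finset.range (2 * (r - 1) + 4)) ((Finset.range (2 * r + 4)).filter (fun k => k ≠ 0 ∧ k ≠ r))
        (fun x => if x < r - 1 then x + 1 else x + 2) hmono himg
        (fun u v => ellGamma (t ^ i * (extA (2 * r + 4) (Atld p q t r (N + 1) a) u * extA (2 * r + 4) (Atld p q t r (N + 1) a) v)) p q ^ ((N + 1 - i + r - 3).choose (r - 2)))]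
      refine Finset.prod_congr rfl fun k hk => Finset.prod_congr rfl fun l hl => ?_
      rw [Finset.mem_range] at hk
      rw [Finset.mem_filter, Finset.mem_range] at hl
      rw [hBF k hk, hBF l hl.1,
        show (N + 1 - i + (r - 1) - 2).choose (r - 1 - 1) = (N + 1 - i + r - 3).choose (r - 2) from by
          rw [show N + 1 - i + (r - 1) - 2 = N + 1 - i + r - 3 from by omega,
            show r - 1 - 1 = r - 2 from by omega]]
    have hden : (∏ i ∈ Finset.range (N + 1), ∏ j ∈ Finset.range (N + 1 - i), ∏ k : Fin (r - 1),
        ∏ l ∈ Finset.univ.filter (fun l => k < l),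
          (efun p t (t ^ i * Bvec p q t r (N + 1) a (Fin.castLE (by omega) k))
              (t ^ j * Bvec p q t r (N + 1) a (Fin.castLE (by omega) l)) *
            efun q t (t ^ i * Bvec p q t r (N + 1) a (Fin.castLE (by omega) k))
              (t ^ j * Bvec p q t r (N + 1) a (Fin.castLE (by omega) l)))
            ^ ((N + 1 - i - j + (r - 1) - 3).choose (r - 1 - 2)))
        = (∏ i ∈ Finset.range (N + 1), ∏ j ∈ Finset.range (N + 1 - i), ∏ u ∈ (Finset.range r).filter (fun k => k ≠ 0),
            ∏ v ∈ ((Finset.range r).filter (fun k => k ≠ 0)).filter (fun v => u < v),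
              (efun p t (t ^ (i) * extA (2 * r + 4) a (u)) (t ^ (j) * extA (2 * r + 4) a (v)) *
                efun q t (t ^ (i) * extA (2 * r + 4) a (u)) (t ^ (j) * extA (2 * r + 4) a (v)))
                ^ ((N + 1 - i - j + r - 4).choose (r - 3))) := by
      have hcastB : ∀ (h : r - 1 ≤ 2 * (r - 1) + 4) (k : Fin (r - 1)),
          Bvec p q t r (N + 1) a (Fin.castLE h k) = extA (2 * r + 4) a ((k : ℕ) + 1) := by
        intro h k
        simp only [Bvec]
        rw [dif_pos (by exact k.isLt), extA_lt (2 * r + 4) a _ (by omega)]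
        rfl
      have hmono1 : ∀ k ∈ Finset.range (r - 1), ∀ l ∈ Finset.range (r - 1),
          (k < l ↔ k + 1 < l + 1) := by intro k _ l _; omega
      have himg1 : (Finset.range (r - 1)).image (fun x => x + 1) = (Finset.range r).filter (fun k => k ≠ 0) := by
        ext y
        simp only [Finset.mem_image, Finset.mem_range, Finset.mem_filter]
        constructor
        · rintro ⟨x, hx, rfl⟩; omega
        · rintro ⟨hy, hy0⟩; exact ⟨y - 1, by omega, by omega⟩
      refine Finset.prod_congr rfl fun i _ => Finset.prod_congr rfl fun j _ => ?_
      simp only [hcastB, Fin.lt_def]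
      rw [fin_double_to_range (r - 1) (fun u v => u < v)
        (fun u v => (efun p t (t ^ i * extA (2 * r + 4) a (u + 1)) (t ^ j * extA (2 * r + 4) a (v + 1)) *
          efun q t (t ^ i * extA (2 * r + 4) a (u + 1)) (t ^ j * extA (2 * r + 4) a (v + 1)))
            ^ ((N + 1 - i - j + (r - 1) - 3).choose (r - 1 - 2)))]
      rw [prod_pairs_reindex (Finset.range (r - 1)) ((Finset.range r).filter (fun k => k ≠ 0)) (fun x => x + 1) hmono1 himg1
        (fun u v => (efun p t (t ^ i * extA (2 * r + 4) a u) (t ^ j * extA (2 * r + 4) a v) *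
          efun q t (t ^ i * extA (2 * r + 4) a u) (t ^ j * extA (2 * r + 4) a v)) ^ ((N + 1 - i - j + r - 4).choose (r - 3)))]
      refine Finset.prod_congr rfl fun u _ => Finset.prod_congr rfl fun v _ => ?_
      rw [show (N + 1 - i - j + (r - 1) - 3).choose (r - 1 - 2)
          = (N + 1 - i - j + r - 4).choose (r - 3) from by
        rw [show N + 1 - i - j + (r - 1) - 3 = N + 1 - i - j + r - 4 from by omega,
          show r - 1 - 2 = r - 3 from by omega]]
    rw [hnum, hden]
  have hF7 : Lfun p q t r N (Ashift p q t r (N + 1) a)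
      = (∏ i ∈ Finset.range N, ellGamma (t ^ (i + 2)) p q ^ ((N - i + r - 2).choose (r - 1))) * (∏ i ∈ Finset.range N, ∏ k ∈ (Finset.range (2 * r + 4)).filter (fun k => k ≠ 0 ∧ k ≠ r), (ellGamma (t ^ (i + 1) * (a 0 * extA (2 * r + 4) (Atld p q t r (N + 1) a) k)) p q * ellGamma (t ^ (i + 1) * (extA (2 * r + 4) (Atld p q t r (N + 1) a) k / a 0)) p q) ^ ((N - i + r - 2).choose (r - 1))) * (∏ i ∈ Finset.range N, ∏ k ∈ (Finset.range (2 * r + 4)).filter (fun k => k ≠ 0 ∧ k ≠ r), ∏ l ∈ ((Finset.range (2 * r + 4)).filter (fun k => k ≠ 0 ∧ k ≠ r)).filter (fun l => k < l), ellGamma (t ^ (i) * (extA (2 * r + 4) (Atld p q t r (N + 1) a) k * extA (2 * r + 4) (Atld p q t r (N + 1) a) l)) p q ^ ((N - i + r - 2).choose (r - 1))) / ((∏ i ∈ Finset.range N, ∏ j ∈ Finset.range (N - i), ∏ v ∈ (Finset.range r).filter (fun k => k ≠ 0), (efun p t (t ^ (i + 1) * extA (2 * r + 4) a (0)) (t ^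 (j) * extA (2 * r + 4) a (v)) * efun q t (t ^ (i + 1) * extA (2 * r + 4) a (0)) (t ^ (j) * extA (2 * r + 4) a (v))) ^ ((N - i - j + r - 3).choose (r - 2))) * (∏ i ∈ Finset.range N, ∏ j ∈ Finset.range (N - i), ∏ u ∈ (Finset.range r).filter (fun k => k ≠ 0), ∏ v ∈ ((Finset.range r).filter (fun k => k ≠ 0)).filter (fun v => u < v), (efun p t (t ^ (i) * extA (2 * r + 4) a (u)) (t ^ (j) * extA (2 * r + 4) a (v)) * efun q t (t ^ (i) * extA (2 * r + 4) a (u)) (t ^ (j) * extA (2 * r + 4) a (v))) ^ ((N - i - j + r - 3).choose (r - 2)))) := by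
    unfold Lfun
    have hS0 : extA (2 * r + 4) (Ashift p q t r (N + 1) a) 0 = t * a 0 := by
      rw [extA_lt _ _ 0 (by omega)]
      simp [Ashift]
    have hSr : extA (2 * r + 4) (Ashift p q t r (N + 1) a) r = t * (a 0)⁻¹ := by
      rw [extA_lt _ _ r (by omega)]
      simp only [Ashift, hvalmk]
      rw [if_neg (by omega)]
      simp
    have hSF : ∀ k ∈ (Finset.range (2 * r + 4)).filter (fun k => k ≠ 0 ∧ k ≠ r), extA (2 * r + 4) (Ashift p q t r (N + 1) a) k = extA (2 * r + 4) (Atld p q t r (N + 1) a) k := by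
      intro k hk
      simp only [Finset.mem_filter, Finset.mem_range] at hk
      rw [extA_lt _ _ k hk.1, extA_lt _ _ k hk.1]
      simp only [Ashift, hvalmk]
      rw [if_neg hk.2.1, if_neg hk.2.2]
    have hSG : ∀ k ∈ (Finset.range r).filter (fun k => k ≠ 0), extA (2 * r + 4) (Ashift p q t r (N + 1) a) k = extA (2 * r + 4) a k := by
      intro k hk
      simp only [Finset.mem_filter, Finset.mem_range] at hk
      rw [extA_lt _ _ k (by omega), extA_lt _ _ k (by omega)]
      simp only [Ashift, Atld, hvalmk]
      rw [if_neg hk.2, if_neg (by omega), if_neg (by omega), if_neg (by omega)]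
    have hES : ((Finset.range (2 * r + 4)).erase 0).erase r = (Finset.range (2 * r + 4)).filter (fun k => k ≠ 0 ∧ k ≠ r) := by
      ext x
      simp only [Finset.mem_erase, Finset.mem_filter, Finset.mem_range]
      tauto
    have hnum7 : (∏ i ∈ Finset.range N, ∏ k : Fin (2 * r + 4),
        ∏ l ∈ Finset.univ.filter (fun l => k < l),
          ellGamma (t ^ i * (Ashift p q t r (N + 1) a k * Ashift p q t r (N + 1) a l)) p q
            ^ ((N - i + r - 2).choose (r - 1)))
        = (∏ i ∈ Finset.range N, ellGamma (t ^ (i + 2)) p q ^ ((N - i + r - 2).choose (r - 1)))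
          * ((∏ i ∈ Finset.range N, ∏ k ∈ (Finset.range (2 * r + 4)).filter (fun k => k ≠ 0 ∧ k ≠ r),
              (ellGamma (t ^ (i + 1) * (a 0 * extA (2 * r + 4) (Atld p q t r (N + 1) a) k)) p q *
                ellGamma (t ^ (i + 1) * (extA (2 * r + 4) (Atld p q t r (N + 1) a) k / a 0)) p q) ^ ((N - i + r - 2).choose (r - 1)))
            * ∏ i ∈ Finset.range N, ∏ k ∈ (Finset.range (2 * r + 4)).filter (fun k => k ≠ 0 ∧ k ≠ r), ∏ l ∈ ((Finset.range (2 * r + 4)).filter (fun k => k ≠ 0 ∧ k ≠ r)).filter (fun l => k < l),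
                ellGamma (t ^ (i) * (extA (2 * r + 4) (Atld p q t r (N + 1) a) k * extA (2 * r + 4) (Atld p q t r (N + 1) a) l)) p q ^ ((N - i + r - 2).choose (r - 1))) := by
      have perI : ∀ i : ℕ, (∏ k : Fin (2 * r + 4), ∏ l ∈ Finset.univ.filter (fun l => k < l),
          ellGamma (t ^ i * (Ashift p q t r (N + 1) a k * Ashift p q t r (N + 1) a l)) p q
            ^ ((N - i + r - 2).choose (r - 1)))
          = ellGamma (t ^ (i + 2)) p q ^ ((N - i + r - 2).choose (r - 1))
            * ((∏ k ∈ (Finset.range (2 * r + 4)).filter (fun k => k ≠ 0 ∧ k ≠ r), (ellGamma (t ^ (i + 1) * (a 0 * extA (2 * r + 4) (Atld p q t r (N + 1) a) k)) p q *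
                ellGamma (t ^ (i + 1) * (extA (2 * r + 4) (Atld p q t r (N + 1) a) k / a 0)) p q) ^ ((N - i + r - 2).choose (r - 1)))
              * ∏ k ∈ (Finset.range (2 * r + 4)).filter (fun k => k ≠ 0 ∧ k ≠ r), ∏ l ∈ ((Finset.range (2 * r + 4)).filter (fun k => k ≠ 0 ∧ k ≠ r)).filter (fun l => k < l),
                  ellGamma (t ^ (i) * (extA (2 * r + 4) (Atld p q t r (N + 1) a) k * extA (2 * r + 4) (Atld p q t r (N + 1) a) l)) p q ^ ((N - i + r - 2).choose (r - 1))) := by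
        intro i
        simp only [extA_coe (2 * r + 4) (Ashift p q t r (N + 1) a), Fin.lt_def]
        rw [fin_double_to_range (2 * r + 4) (fun u v => u < v)
          (fun u v => ellGamma (t ^ i * (extA (2 * r + 4) (Ashift p q t r (N + 1) a) u * extA (2 * r + 4) (Ashift p q t r (N + 1) a) v)) p q
            ^ ((N - i + r - 2).choose (r - 1)))]
        beta_reduce
        rw [prod_pairs_extract (Finset.range (2 * r + 4))
          (fun u v => ellGamma (t ^ i * (extA (2 * r + 4) (Ashift p q t r (N + 1) a) u * extA (2 * r + 4) (Ashift p q t r (N + 1) a) v)) p q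
            ^ ((N - i + r - 2).choose (r - 1)))
          (fun u v => by beta_reduce; rw [mul_comm (extA (2 * r + 4) (Ashift p q t r (N + 1) a) u) (extA (2 * r + 4) (Ashift p q t r (N + 1) a) v)]) 0 (Finset.mem_range.mpr (by omega))]
        rw [prod_pairs_extract ((Finset.range (2 * r + 4)).erase 0)
          (fun u v => ellGamma (t ^ i * (extA (2 * r + 4) (Ashift p q t r (N + 1) a) u * extA (2 * r + 4) (Ashift p q t r (N + 1) a) v)) p q
            ^ ((N - i + r - 2).choose (r - 1)))
          (fun u v => by beta_reduce; rw [mul_comm (extA (2 * r + 4) (Ashift p q t r (N + 1) a) u) (extA (2 * r + 4) (Ashift p q t r (N + 1) a) v)]) r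
          (by simp only [Finset.mem_erase, Finset.mem_range]; omega)]
        rw [← Finset.mul_prod_erase ((Finset.range (2 * r + 4)).erase 0)
          (fun k => ellGamma (t ^ i * (extA (2 * r + 4) (Ashift p q t r (N + 1) a) 0 * extA (2 * r + 4) (Ashift p q t r (N + 1) a) k)) p q ^ ((N - i + r - 2).choose (r - 1)))
          (show r ∈ (Finset.range (2 * r + 4)).erase 0 by
            simp only [Finset.mem_erase, Finset.mem_range]; omega)]
        rw [hES]
        have p1 : ellGamma (t ^ i * (extA (2 * r + 4) (Ashift p q t r (N + 1) a) 0 * extA (2 * r + 4) (Ashift p q t r (N + 1) a) r)) p q ^ ((N - i + r - 2).choose (r - 1))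
            = ellGamma (t ^ (i + 2)) p q ^ ((N - i + r - 2).choose (r - 1)) := by
          rw [hS0, hSr, show t ^ i * (t * a 0 * (t * (a 0)⁻¹)) = t ^ (i + 2) from by
            rw [show t * a 0 * (t * (a 0)⁻¹) = t * t * (a 0 * (a 0)⁻¹) from by ring,
              mul_inv_cancel₀ (ha 0), mul_one]
            ring]
        have p2 : (∏ k ∈ (Finset.range (2 * r + 4)).filter (fun k => k ≠ 0 ∧ k ≠ r),
              ellGamma (t ^ i * (extA (2 * r + 4) (Ashift p q t r (N + 1) a) 0 * extA (2 * r + 4) (Ashift p q t r (N + 1) a) k)) p q ^ ((N - i + r - 2).choose (r - 1)))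
            * (∏ k ∈ (Finset.range (2 * r + 4)).filter (fun k => k ≠ 0 ∧ k ≠ r),
              ellGamma (t ^ i * (extA (2 * r + 4) (Ashift p q t r (N + 1) a) r * extA (2 * r + 4) (Ashift p q t r (N + 1) a) k)) p q ^ ((N - i + r - 2).choose (r - 1)))
            = ∏ k ∈ (Finset.range (2 * r + 4)).filter (fun k => k ≠ 0 ∧ k ≠ r), (ellGamma (t ^ (i + 1) * (a 0 * extA (2 * r + 4) (Atld p q t r (N + 1) a) k)) p q *
                ellGamma (t ^ (i + 1) * (extA (2 * r + 4) (Atld p q t r (N + 1) a) k / a 0)) p q) ^ ((N - i + r - 2).choose (r - 1)) := by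
          rw [← Finset.prod_mul_distrib]
          refine Finset.prod_congr rfl fun k hk => ?_
          rw [hS0, hSr, hSF k hk, ← mul_pow,
            show t ^ i * (t * a 0 * extA (2 * r + 4) (Atld p q t r (N + 1) a) k) = t ^ (i + 1) * (a 0 * extA (2 * r + 4) (Atld p q t r (N + 1) a) k) from by ring,
            show t ^ i * (t * (a 0)⁻¹ * extA (2 * r + 4) (Atld p q t r (N + 1) a) k) = t ^ (i + 1) * (extA (2 * r + 4) (Atld p q t r (N + 1) a) k / a 0) from by ring]
        have p3 : (∏ k ∈ (Finset.range (2 * r + 4)).filter (fun k => k ≠ 0 ∧ k ≠ r), ∏ l ∈ ((Finset.range (2 * r + 4)).filter (fun k => k ≠ 0 ∧ k ≠ r)).filter (fun l => k < l),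
              ellGamma (t ^ i * (extA (2 * r + 4) (Ashift p q t r (N + 1) a) k * extA (2 * r + 4) (Ashift p q t r (N + 1) a) l)) p q ^ ((N - i + r - 2).choose (r - 1)))
            = ∏ k ∈ (Finset.range (2 * r + 4)).filter (fun k => k ≠ 0 ∧ k ≠ r), ∏ l ∈ ((Finset.range (2 * r + 4)).filter (fun k => k ≠ 0 ∧ k ≠ r)).filter (fun l => k < l),
              ellGamma (t ^ (i) * (extA (2 * r + 4) (Atld p q t r (N + 1) a) k * extA (2 * r + 4) (Atld p q t r (N + 1) a) l)) p q ^ ((N - i + r - 2).choose (r - 1)) := by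
          refine Finset.prod_congr rfl fun k hk => Finset.prod_congr rfl fun l hl => ?_
          rw [Finset.mem_filter] at hl
          rw [hSF k hk, hSF l hl.1]
        rw [p1, p3, ← p2]
        ring
      calc (∏ i ∈ Finset.range N, ∏ k : Fin (2 * r + 4),
            ∏ l ∈ Finset.univ.filter (fun l => k < l),
              ellGamma (t ^ i * (Ashift p q t r (N + 1) a k * Ashift p q t r (N + 1) a l)) p q
                ^ ((N - i + r - 2).choose (r - 1)))
          = ∏ i ∈ Finset.range N,
              (ellGamma (t ^ (i + 2)) p q ^ ((N - i + r - 2).choose (r - 1))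
                * ((∏ k ∈ (Finset.range (2 * r + 4)).filter (fun k => k ≠ 0 ∧ k ≠ r), (ellGamma (t ^ (i + 1) * (a 0 * extA (2 * r + 4) (Atld p q t r (N + 1) a) k)) p q *
                    ellGamma (t ^ (i + 1) * (extA (2 * r + 4) (Atld p q t r (N + 1) a) k / a 0)) p q) ^ ((N - i + r - 2).choose (r - 1)))
                  * ∏ k ∈ (Finset.range (2 * r + 4)).filter (fun k => k ≠ 0 ∧ k ≠ r), ∏ l ∈ ((Finset.range (2 * r + 4)).filter (fun k => k ≠ 0 ∧ k ≠ r)).filter (fun l => k < l),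
                      ellGamma (t ^ (i) * (extA (2 * r + 4) (Atld p q t r (N + 1) a) k * extA (2 * r + 4) (Atld p q t r (N + 1) a) l)) p q
                        ^ ((N - i + r - 2).choose (r - 1)))) :=
            Finset.prod_congr rfl fun i _ => perI i
        _ = _ := by
            rw [Finset.prod_mul_distrib, Finset.prod_mul_distrib]
    have hden7 : (∏ i ∈ Finset.range N, ∏ j ∈ Finset.range (N - i), ∏ k : Fin r,
        ∏ l ∈ Finset.univ.filter (fun l => k < l),
          (efun p t (t ^ i * Ashift p q t r (N + 1) a (Fin.castLE (by omega) k))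
              (t ^ j * Ashift p q t r (N + 1) a (Fin.castLE (by omega) l)) *
            efun q t (t ^ i * Ashift p q t r (N + 1) a (Fin.castLE (by omega) k))
              (t ^ j * Ashift p q t r (N + 1) a (Fin.castLE (by omega) l)))
            ^ ((N - i - j + r - 3).choose (r - 2)))
        = (∏ i ∈ Finset.range N, ∏ j ∈ Finset.range (N - i), ∏ v ∈ (Finset.range r).filter (fun k => k ≠ 0),
            (efun p t (t ^ (i + 1) * extA (2 * r + 4) a (0)) (t ^ (j) * extA (2 * r + 4) a (v)) *
              efun q t (t ^ (i + 1) * extA (2 * r + 4) a (0)) (t ^ (j) * extA (2 * r + 4) a (v)))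
              ^ ((N - i - j + r - 3).choose (r - 2)))
          * ∏ i ∈ Finset.range N, ∏ j ∈ Finset.range (N - i), ∏ u ∈ (Finset.range r).filter (fun k => k ≠ 0),
              ∏ v ∈ ((Finset.range r).filter (fun k => k ≠ 0)).filter (fun v => u < v),
                (efun p t (t ^ (i) * extA (2 * r + 4) a (u)) (t ^ (j) * extA (2 * r + 4) a (v)) *
                  efun q t (t ^ (i) * extA (2 * r + 4) a (u)) (t ^ (j) * extA (2 * r + 4) a (v)))
                  ^ ((N - i - j + r - 3).choose (r - 2)) := by
      have hcastS : ∀ (h : r ≤ 2 * r + 4) (k : Fin r),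
          Ashift p q t r (N + 1) a (Fin.castLE h k) = extA (2 * r + 4) (Ashift p q t r (N + 1) a) (k : ℕ) := by
        intro h k
        rw [extA_lt _ _ (k : ℕ) (by omega)]
        rfl
      have perIJ : ∀ i j : ℕ, (∏ k : Fin r, ∏ l ∈ Finset.univ.filter (fun l => k < l),
          (efun p t (t ^ i * Ashift p q t r (N + 1) a (Fin.castLE (by omega) k))
              (t ^ j * Ashift p q t r (N + 1) a (Fin.castLE (by omega) l)) *
            efun q t (t ^ i * Ashift p q t r (N + 1) a (Fin.castLE (by omega) k))
              (t ^ j * Ashift p q t r (N + 1) a (Fin.castLE (by omega) l)))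
            ^ ((N - i - j + r - 3).choose (r - 2)))
          = (∏ v ∈ (Finset.range r).filter (fun k => k ≠ 0),
              (efun p t (t ^ (i + 1) * extA (2 * r + 4) a (0)) (t ^ (j) * extA (2 * r + 4) a (v)) *
                efun q t (t ^ (i + 1) * extA (2 * r + 4) a (0)) (t ^ (j) * extA (2 * r + 4) a (v)))
                ^ ((N - i - j + r - 3).choose (r - 2)))
            * ∏ u ∈ (Finset.range r).filter (fun k => k ≠ 0), ∏ v ∈ ((Finset.range r).filter (fun k => k ≠ 0)).filter (fun v => u < v),
                (efun p t (t ^ (i) * extA (2 * r + 4) a (u)) (t ^ (j) * extA (2 * r + 4) a (v)) *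
                  efun q t (t ^ (i) * extA (2 * r + 4) a (u)) (t ^ (j) * extA (2 * r + 4) a (v)))
                  ^ ((N - i - j + r - 3).choose (r - 2)) := by
        intro i j
        simp only [hcastS, Fin.lt_def]
        rw [fin_double_to_range r (fun u v => u < v)
          (fun u v => (efun p t (t ^ i * extA (2 * r + 4) (Ashift p q t r (N + 1) a) u) (t ^ j * extA (2 * r + 4) (Ashift p q t r (N + 1) a) v) *
            efun q t (t ^ i * extA (2 * r + 4) (Ashift p q t r (N + 1) a) u) (t ^ j * extA (2 * r + 4) (Ashift p q t r (N + 1) a) v)) ^ ((N - i - j + r - 3).choose (r - 2)))]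
        beta_reduce
        rw [prod_pairs_extract_min (Finset.range r)
          (fun u v => (efun p t (t ^ i * extA (2 * r + 4) (Ashift p q t r (N + 1) a) u) (t ^ j * extA (2 * r + 4) (Ashift p q t r (N + 1) a) v) *
            efun q t (t ^ i * extA (2 * r + 4) (Ashift p q t r (N + 1) a) u) (t ^ j * extA (2 * r + 4) (Ashift p q t r (N + 1) a) v)) ^ ((N - i - j + r - 3).choose (r - 2)))
          0 (Finset.mem_range.mpr (by omega))
          (fun k hk hk0 => by rw [Finset.mem_range] at hk; omega)]
        rw [hVE]
        congr 1
        · refine Finset.prod_congr rfl fun v hv => ?_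
          rw [hS0, hSG v hv,
            show t ^ i * (t * a 0) = t ^ (i + 1) * extA (2 * r + 4) a 0 from by rw [ha0G]; ring]
        · refine Finset.prod_congr rfl fun u hu => Finset.prod_congr rfl fun v hv => ?_
          rw [Finset.mem_filter] at hv
          rw [hSG u hu, hSG v hv.1]
      calc (∏ i ∈ Finset.range N, ∏ j ∈ Finset.range (N - i), ∏ k : Fin r,
            ∏ l ∈ Finset.univ.filter (fun l => k < l),
              (efun p t (t ^ i * Ashift p q t r (N + 1) a (Fin.castLE (by omega) k))
                  (t ^ j * Ashift p q t r (N + 1) a (Fin.castLE (by omega) l)) *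
                efun q t (t ^ i * Ashift p q t r (N + 1) a (Fin.castLE (by omega) k))
                  (t ^ j * Ashift p q t r (N + 1) a (Fin.castLE (by omega) l)))
                ^ ((N - i - j + r - 3).choose (r - 2)))
          = ∏ i ∈ Finset.range N, ∏ j ∈ Finset.range (N - i),
              ((∏ v ∈ (Finset.range r).filter (fun k => k ≠ 0),
                (efun p t (t ^ (i + 1) * extA (2 * r + 4) a (0)) (t ^ (j) * extA (2 * r + 4) a (v)) *
                  efun q t (t ^ (i + 1) * extA (2 * r + 4) a (0)) (t ^ (j) * extA (2 * r + 4) a (v)))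
                  ^ ((N - i - j + r - 3).choose (r - 2)))
              * ∏ u ∈ (Finset.range r).filter (fun k => k ≠ 0), ∏ v ∈ ((Finset.range r).filter (fun k => k ≠ 0)).filter (fun v => u < v),
                  (efun p t (t ^ (i) * extA (2 * r + 4) a (u)) (t ^ (j) * extA (2 * r + 4) a (v)) *
                    efun q t (t ^ (i) * extA (2 * r + 4) a (u)) (t ^ (j) * extA (2 * r + 4) a (v)))
                    ^ ((N - i - j + r - 3).choose (r - 2))) :=
            Finset.prod_congr rfl fun i _ => Finset.prod_congr rfl fun j _ => perIJ i j
        _ = _ := by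
            rw [← Finset.prod_mul_distrib]
            exact Finset.prod_congr rfl fun i _ => Finset.prod_mul_distrib
    rw [hnum7, hden7, ← mul_assoc]
  have hE1 : (∏ i ∈ Finset.range N, ellGamma (t ^ (i + 1)) p q ^ ((N + 1 - (i + 1) + r - 2).choose (r - 1))) * (∏ i ∈ Finset.range (N + 1), ellGamma (t ^ (i + 1)) p q ^ ((N + 1 - (i + 1) + r - 2).choose (r - 2))) = ellGamma t p q ^ ((N + 1 + r - 2).choose (r - 1)) * (∏ i ∈ Finset.range N, ellGamma (t ^ (i + 2)) p q ^ ((N - i + r - 2).choose (r - 1))) := by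
    have h := ledger1 (fun i => ellGamma (t ^ i) p q) N r hr
    rw [pow_one] at h
    exact h
  have hE2 : (∏ i ∈ Finset.range (N + 1), ∏ k ∈ (Finset.range (2 * r + 4)).filter (fun k => k ≠ 0 ∧ k ≠ r), (ellGamma (t ^ (i) * (a 0 * extA (2 * r + 4) (Atld p q t r (N + 1) a) k)) p q * ellGamma (t ^ (i) * (extA (2 * r + 4) (Atld p q t r (N + 1) a) k / a 0)) p q) ^ ((N + 1 - i + r - 2).choose (r - 1))) = (∏ k ∈ (Finset.range (2 * r + 4)).filter (fun k => k ≠ 0 ∧ k ≠ r), (ellGamma (t ^ (0) * (a 0 * extA (2 * r + 4) (Atld p q t r (N + 1) a) k)) p q * ellGamma (t ^ (0) * (extA (2 * r + 4) (Atld p q t r (N + 1) a) k / a 0)) p q) ^ ((N + 1 - 0 + r - 2).choose (r - 1))) * (∏ i ∈ Finset.range N, ∏ k ∈ (Finset.range (2 * r + 4)).filter (fun k => k ≠ 0 ∧ k ≠ r), (ellGamma (t ^ (i + 1) * (a 0 * extA (2 * r + 4) (Atld p q t r (N + 1) a) k)) p q * ellGamma (t ^ (i + 1) * (extA (2 * r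 + 4) (Atld p q t r (N + 1) a) k / a 0)) p q) ^ ((N - i + r - 2).choose (r - 1))) := by
    rw [Finset.prod_range_succ', mul_comm]
    congr 1
    refine Finset.prod_congr rfl fun i hi => Finset.prod_congr rfl fun k _ => ?_
    rw [mem_range] at hi
    have e5 : N + 1 - (i + 1) + r - 2 = N - i + r - 2 := by omega
    rw [e5]
  have hE3 : (∏ i ∈ Finset.range (N + 1), ∏ k ∈ (Finset.range (2 * r + 4)).filter (fun k => k ≠ 0 ∧ k ≠ r), ∏ l ∈ ((Finset.range (2 * r + 4)).filter (fun k => k ≠ 0 ∧ k ≠ r)).filter (fun l => k < l), ellGamma (t ^ (i) * (extA (2 * r + 4) (Atld p q t r (N + 1) a) k * extA (2 * r + 4) (Atld p q t r (N + 1) a) l)) p q ^ ((N + 1 - i + r - 2).choose (r - 1))) = (∏ i ∈ Finset.range (N + 1), ∏ k ∈ (Finset.range (2 * r + 4)).filter (fun k => k ≠ 0 ∧ k ≠ r), ∏ l ∈ ((Finset.range (2 * r + 4)).filter (fun k => k ≠ 0 ∧ k ≠ r)).filter (fun l => k < l), ellGamma (t ^ (i) * (extA (2 * r + 4) (Atld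 p q t r (N + 1) a) k * extA (2 * r + 4) (Atld p q t r (N + 1) a) l)) p q ^ ((N + 1 - i + r - 3).choose (r - 2))) * (∏ i ∈ Finset.range N, ∏ k ∈ (Finset.range (2 * r + 4)).filter (fun k => k ≠ 0 ∧ k ≠ r), ∏ l ∈ ((Finset.range (2 * r + 4)).filter (fun k => k ≠ 0 ∧ k ≠ r)).filter (fun l => k < l), ellGamma (t ^ (i) * (extA (2 * r + 4) (Atld p q t r (N + 1) a) k * extA (2 * r + 4) (Atld p q t r (N + 1) a) l)) p q ^ ((N - i + r - 2).choose (r - 1))) := by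
    refine ledger3 (fun i e => ∏ k ∈ (Finset.range (2 * r + 4)).filter (fun k => k ≠ 0 ∧ k ≠ r), ∏ l ∈ ((Finset.range (2 * r + 4)).filter (fun k => k ≠ 0 ∧ k ≠ r)).filter (fun l => k < l),
      ellGamma (t ^ i * (extA (2 * r + 4) (Atld p q t r (N + 1) a) k * extA (2 * r + 4) (Atld p q t r (N + 1) a) l)) p q ^ e) N r hr ?_ ?_
    · intro i x y
      rw [← Finset.prod_mul_distrib]
      refine Finset.prod_congr rfl fun k _ => ?_
      rw [← Finset.prod_mul_distrib]
      exact Finset.prod_congr rfl fun l _ => pow_add _ _ _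
    · intro i
      exact Finset.prod_eq_one fun k _ => Finset.prod_eq_one fun l _ => pow_zero _
  have hE4 : (∏ i ∈ Finset.range (N + 1), ∏ j ∈ Finset.range (N + 1 - i), ∏ u ∈ Finset.range r, ∏ v ∈ (Finset.range r).filter (fun v => u < v), (efun p t (t ^ (i) * extA (2 * r + 4) a (u)) (t ^ (j) * extA (2 * r + 4) a (v)) * efun q t (t ^ (i) * extA (2 * r + 4) a (u)) (t ^ (j) * extA (2 * r + 4) a (v))) ^ ((N + 1 - i - j + r - 3).choose (r - 2))) = (∏ j ∈ Finset.range (N + 1), ∏ v ∈ (Finset.range r).filter (fun k => k ≠ 0), (efun p t (t ^ (0) * extA (2 * r + 4) a (0)) (t ^ (j) * extA (2 * r + 4) a (v)) * efun q t (t ^ (0) * extA (2 * r + 4) a (0)) (t ^ (j) * extA (2 * r + 4) a (v))) ^ ((N + 1 - j + r - 3).choose (r - 2))) * (∏ i ∈ Finset.range N, ∏ j ∈ Finset.range (N - i), ∏ v ∈ (Finset.range r).filter (fun k => k ≠ 0), (efun p t (t ^ (i + 1) * extA (2 * r + 4) a (0)) (t ^ (j) * extA (2 * r + 4) a (v)) *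 efun q t (t ^ (i + 1) * extA (2 * r + 4) a (0)) (t ^ (j) * extA (2 * r + 4) a (v))) ^ ((N - i - j + r - 3).choose (r - 2))) * ((∏ i ∈ Finset.range (N + 1), ∏ j ∈ Finset.range (N + 1 - i), ∏ u ∈ (Finset.range r).filter (fun k => k ≠ 0), ∏ v ∈ ((Finset.range r).filter (fun k => k ≠ 0)).filter (fun v => u < v), (efun p t (t ^ (i) * extA (2 * r + 4) a (u)) (t ^ (j) * extA (2 * r + 4) a (v)) * efun q t (t ^ (i) * extA (2 * r + 4) a (u)) (t ^ (j) * extA (2 * r + 4) a (v))) ^ ((N + 1 - i - j + r - 4).choose (r - 3))) * (∏ i ∈ Finset.range N, ∏ j ∈ Finset.range (N - i), ∏ u ∈ (Finset.range r).filter (fun k => k ≠ 0), ∏ v ∈ ((Finset.range r).filter (fun k => k ≠ 0)).filter (fun v => u < v), (efun p t (t ^ (i) * extA (2 * r + 4) a (u)) (t ^ (j) * extA (2 * r + 4) a (v)) * efun q t (t ^ (i) * extA (2 * r + 4) a (u)) (t ^ (j) * extA (2 * r + 4) a (v))) ^ ((N - i - j + r - 3).choose (r - 2)))) := by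
    have step1 : ∀ i j : ℕ,
        (∏ u ∈ Finset.range r, ∏ v ∈ (Finset.range r).filter (fun v => u < v),
          (efun p t (t ^ (i) * extA (2 * r + 4) a (u)) (t ^ (j) * extA (2 * r + 4) a (v)) *
            efun q t (t ^ (i) * extA (2 * r + 4) a (u)) (t ^ (j) * extA (2 * r + 4) a (v)))
            ^ ((N + 1 - i - j + r - 3).choose (r - 2)))
        = (∏ v ∈ (Finset.range r).filter (fun k => k ≠ 0),
            (efun p t (t ^ (i) * extA (2 * r + 4) a (0)) (t ^ (j) * extA (2 * r + 4) a (v)) *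
              efun q t (t ^ (i) * extA (2 * r + 4) a (0)) (t ^ (j) * extA (2 * r + 4) a (v)))
              ^ ((N + 1 - i - j + r - 3).choose (r - 2)))
          * ∏ u ∈ (Finset.range r).filter (fun k => k ≠ 0), ∏ v ∈ ((Finset.range r).filter (fun k => k ≠ 0)).filter (fun v => u < v),
              (efun p t (t ^ (i) * extA (2 * r + 4) a (u)) (t ^ (j) * extA (2 * r + 4) a (v)) *
                efun q t (t ^ (i) * extA (2 * r + 4) a (u)) (t ^ (j) * extA (2 * r + 4) a (v)))
                ^ ((N + 1 - i - j + r - 3).choose (r - 2)) := by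
      intro i j
      rw [prod_pairs_extract_min (Finset.range r)
        (fun u v => (efun p t (t ^ (i) * extA (2 * r + 4) a (u)) (t ^ (j) * extA (2 * r + 4) a (v)) *
          efun q t (t ^ (i) * extA (2 * r + 4) a (u)) (t ^ (j) * extA (2 * r + 4) a (v)))
          ^ ((N + 1 - i - j + r - 3).choose (r - 2)))
        0 (Finset.mem_range.mpr (by omega))
        (fun k hk hk0 => by rw [Finset.mem_range] at hk; omega)]
      rw [hVE]
    calc (∏ i ∈ Finset.range (N + 1), ∏ j ∈ Finset.range (N + 1 - i),
          ∏ u ∈ Finset.range r, ∏ v ∈ (Finset.range r).filter (fun v => u < v),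
            (efun p t (t ^ (i) * extA (2 * r + 4) a (u)) (t ^ (j) * extA (2 * r + 4) a (v)) *
              efun q t (t ^ (i) * extA (2 * r + 4) a (u)) (t ^ (j) * extA (2 * r + 4) a (v)))
              ^ ((N + 1 - i - j + r - 3).choose (r - 2)))
        = ∏ i ∈ Finset.range (N + 1), ∏ j ∈ Finset.range (N + 1 - i),
            ((∏ v ∈ (Finset.range r).filter (fun k => k ≠ 0),
              (efun p t (t ^ (i) * extA (2 * r + 4) a (0)) (t ^ (j) * extA (2 * r + 4) a (v)) *
                efun q t (t ^ (i) * extA (2 * r + 4) a (0)) (t ^ (j) * extA (2 * r + 4) a (v)))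
                ^ ((N + 1 - i - j + r - 3).choose (r - 2)))
            * ∏ u ∈ (Finset.range r).filter (fun k => k ≠ 0), ∏ v ∈ ((Finset.range r).filter (fun k => k ≠ 0)).filter (fun v => u < v),
                (efun p t (t ^ (i) * extA (2 * r + 4) a (u)) (t ^ (j) * extA (2 * r + 4) a (v)) *
                  efun q t (t ^ (i) * extA (2 * r + 4) a (u)) (t ^ (j) * extA (2 * r + 4) a (v)))
                  ^ ((N + 1 - i - j + r - 3).choose (r - 2))) :=
          Finset.prod_congr rfl fun i _ => Finset.prod_congr rfl fun j _ => step1 i j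
      _ = (∏ i ∈ Finset.range (N + 1), ∏ j ∈ Finset.range (N + 1 - i), ∏ v ∈ (Finset.range r).filter (fun k => k ≠ 0),
            (efun p t (t ^ (i) * extA (2 * r + 4) a (0)) (t ^ (j) * extA (2 * r + 4) a (v)) *
              efun q t (t ^ (i) * extA (2 * r + 4) a (0)) (t ^ (j) * extA (2 * r + 4) a (v)))
              ^ ((N + 1 - i - j + r - 3).choose (r - 2)))
          * ∏ i ∈ Finset.range (N + 1), ∏ j ∈ Finset.range (N + 1 - i), ∏ u ∈ (Finset.range r).filter (fun k => k ≠ 0),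
              ∏ v ∈ ((Finset.range r).filter (fun k => k ≠ 0)).filter (fun v => u < v),
                (efun p t (t ^ (i) * extA (2 * r + 4) a (u)) (t ^ (j) * extA (2 * r + 4) a (v)) *
                  efun q t (t ^ (i) * extA (2 * r + 4) a (u)) (t ^ (j) * extA (2 * r + 4) a (v)))
                  ^ ((N + 1 - i - j + r - 3).choose (r - 2)) := by
          rw [← Finset.prod_mul_distrib]
          exact Finset.prod_congr rfl fun i _ => Finset.prod_mul_distrib
      _ = _ := by
          congr 1
          · rw [Finset.prod_range_succ', mul_comm]
            congr 1
            refine Finset.prod_congr rfl fun i hi => ?_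
            have e : N + 1 - (i + 1) = N - i := by omega
            rw [e]
          · refine ledger4 (fun i j e => ∏ u ∈ (Finset.range r).filter (fun k => k ≠ 0), ∏ v ∈ ((Finset.range r).filter (fun k => k ≠ 0)).filter (fun v => u < v),
                (efun p t (t ^ (i) * extA (2 * r + 4) a (u)) (t ^ (j) * extA (2 * r + 4) a (v)) *
                  efun q t (t ^ (i) * extA (2 * r + 4) a (u)) (t ^ (j) * extA (2 * r + 4) a (v))) ^ e) N r ?_ ?_
            · intro i j hij
              rw [← Finset.prod_mul_distrib]
              refine Finset.prod_congr rfl fun u hu => ?_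
              rw [← Finset.prod_mul_distrib]
              refine Finset.prod_congr rfl fun v hv => ?_
              simp only [Finset.mem_filter, Finset.mem_range] at hu hv
              rw [← pow_add]
              congr 1
              have hr3 : 3 ≤ r := by omega
              have e1 : N + 1 - i - j + r - 3 = (N + 1 - i - j + r - 4) + 1 := by omega
              have e2 : r - 2 = (r - 3) + 1 := by omega
              have e3 : N - i - j + r - 3 = N + 1 - i - j + r - 4 := by omega
              rw [e1, e2, Nat.choose_succ_succ, e3]
            · intro i j hij
              refine Finset.prod_eq_one fun u hu => Finset.prod_eq_one fun v hv => ?_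
              simp only [Finset.mem_filter, Finset.mem_range] at hu hv
              have hz : (N - i - j + r - 3).choose (r - 2) = 0 :=
                Nat.choose_eq_zero_of_lt (by omega)
              rw [hz, pow_zero]
  have hPq : (poch p p * poch q q) ^ ((N + 1 + r - 2).choose (r - 1)) ≠ 0 := pow_ne_zero _ hppqq
  have hBd : (∏ i ∈ Finset.range (N + 1), ellGamma (t ^ (i + 1)) p q ^ ((N + 1 - (i + 1) + r - 2).choose (r - 2))) ≠ 0 := by
    exact Finset.prod_ne_zero_iff.mpr fun i hi => pow_ne_zero _
      (hGt_ne (i + 1) (by omega) (by rw [Finset.mem_range] at hi; omega))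
  have hGd : (∏ j ∈ Finset.range (N + 1), ∏ v ∈ (Finset.range r).filter (fun k => k ≠ 0), (efun p t (t ^ (0) * extA (2 * r + 4) a (0)) (t ^ (j) * extA (2 * r + 4) a (v)) * efun q t (t ^ (0) * extA (2 * r + 4) a (0)) (t ^ (j) * extA (2 * r + 4) a (v))) ^ ((N + 1 - j + r - 3).choose (r - 2))) ≠ 0 := by
    exact Finset.prod_ne_zero_iff.mpr fun j hj => Finset.prod_ne_zero_iff.mpr fun v hv => by
      rw [Finset.mem_range] at hj
      simp only [Finset.mem_filter, Finset.mem_range] at hv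
      exact pow_ne_zero _ (hEE_ne 0 j 0 v (by omega) (by omega) (by omega) hv.1 (Ne.symm hv.2))
  have hD1 : (∏ i ∈ Finset.range (N + 1), ∏ j ∈ Finset.range (N + 1 - i), ∏ u ∈ (Finset.range r).filter (fun k => k ≠ 0), ∏ v ∈ ((Finset.range r).filter (fun k => k ≠ 0)).filter (fun v => u < v), (efun p t (t ^ (i) * extA (2 * r + 4) a (u)) (t ^ (j) * extA (2 * r + 4) a (v)) * efun q t (t ^ (i) * extA (2 * r + 4) a (u)) (t ^ (j) * extA (2 * r + 4) a (v))) ^ ((N + 1 - i - j + r - 4).choose (r - 3))) ≠ 0 := by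
    exact Finset.prod_ne_zero_iff.mpr fun i hi => Finset.prod_ne_zero_iff.mpr fun j hj =>
      Finset.prod_ne_zero_iff.mpr fun u hu => Finset.prod_ne_zero_iff.mpr fun v hv => by
      rw [Finset.mem_range] at hi hj
      simp only [Finset.mem_filter, Finset.mem_range] at hu hv
      obtain ⟨⟨hv1, hv2⟩, hv3⟩ := hv
      exact pow_ne_zero _ (hEE_ne i j u v (by omega) (by omega) hu.1 hv1 (by omega))
  have hH1 : (∏ i ∈ Finset.range N, ∏ j ∈ Finset.range (N - i), ∏ v ∈ (Finset.range r).filter (fun k => k ≠ 0), (efun p t (t ^ (i + 1) * extA (2 * r + 4) a (0)) (t ^ (j) * extA (2 * r + 4) a (v)) * efun q t (t ^ (i + 1) * extA (2 * r + 4) a (0)) (t ^ (j) * extA (2 * r + 4) a (v))) ^ ((N - i - j + r - 3).choose (r - 2))) ≠ 0 := by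
    exact Finset.prod_ne_zero_iff.mpr fun i hi => Finset.prod_ne_zero_iff.mpr fun j hj =>
      Finset.prod_ne_zero_iff.mpr fun v hv => by
      rw [Finset.mem_range] at hi hj
      simp only [Finset.mem_filter, Finset.mem_range] at hv
      exact pow_ne_zero _ (hEE_ne (i + 1) j 0 v (by omega) (by omega) (by omega) hv.1
        (Ne.symm hv.2))
  have hH2 : (∏ i ∈ Finset.range N, ∏ j ∈ Finset.range (N - i), ∏ u ∈ (Finset.range r).filter (fun k => k ≠ 0), ∏ v ∈ ((Finset.range r).filter (fun k => k ≠ 0)).filter (fun v => u < v), (efun p t (t ^ (i) * extA (2 * r + 4) a (u)) (t ^ (j) * extA (2 * r + 4) a (v)) * efun q t (t ^ (i) * extA (2 * r + 4) a (u)) (t ^ (j) * extA (2 * r + 4) a (v))) ^ ((N - i - j + r - 3).choose (r - 2))) ≠ 0 := by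
    exact Finset.prod_ne_zero_iff.mpr fun i hi => Finset.prod_ne_zero_iff.mpr fun j hj =>
      Finset.prod_ne_zero_iff.mpr fun u hu => Finset.prod_ne_zero_iff.mpr fun v hv => by
      rw [Finset.mem_range] at hi hj
      simp only [Finset.mem_filter, Finset.mem_range] at hu hv
      obtain ⟨⟨hv1, hv2⟩, hv3⟩ := hv
      exact pow_ne_zero _ (hEE_ne i j u v (by omega) (by omega) hu.1 hv1 (by omega))
  have key : ∀ AnV PV bnV bdV gnV gdV N1V D1V G1V G2V G3V H1V H2V : ℂ,
      AnV * bdV = bnV * G1V → PV ≠ 0 → bdV ≠ 0 → gdV ≠ 0 → D1V ≠ 0 → H1V ≠ 0 → H2V ≠ 0 →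
      AnV / PV * (gnV * G2V) * ((N1V * G3V) / (gdV * H1V * (D1V * H2V)))
        = PV⁻¹ * (bnV / bdV) * (gnV / gdV) * (N1V / D1V) * (G1V * G2V * G3V / (H1V * H2V)) := by
    intro AnV PV bnV bdV gnV gdV N1V D1V G1V G2V G3V H1V H2V hE hP hbd hgd hD1' hH1' hH2'
    have L : AnV / PV * (gnV * G2V) * ((N1V * G3V) / (gdV * H1V * (D1V * H2V)))
        = (AnV * gnV * G2V * N1V * G3V) / (PV * gdV * H1V * D1V * H2V) := by ring
    have R : PV⁻¹ * (bnV / bdV) * (gnV / gdV) * (N1V / D1V) * (G1V * G2V * G3V / (H1V * H2V))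
        = (bnV * gnV * N1V * G1V * G2V * G3V) / (PV * bdV * gdV * D1V * H1V * H2V) := by ring
    rw [L, R, div_eq_div_iff (by simp [hP, hgd, hD1', hH1', hH2'])
      (by simp [hP, hbd, hgd, hD1', hH1', hH2'])]
    linear_combination PV * gdV * H1V * D1V * H2V * gnV * G2V * N1V * G3V * hE
  rw [hF1, hF2, hF3, hF4, hF5, hF6, hF7, hE2, hE3, hE4]
  exact key _ _ _ _ _ _ _ _ _ _ _ _ _ hE1 hPq hBd hGd hD1 hH1 hH2

end
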